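/- Let M = M_{A,b,β,c}: F_k → F_{k'} be an affine lift and g ∈ F_k, g' ∈ F_{k'} be sink/source placement functions (a node indexed by the linear function χ_α is a sink iff g(α)=1 and a source iff g(α)=−1, similarly for g' on 𝔽₂^{k'}). Then M maps every node v_{χ_α} labeled by a sink (resp. source) of g to a sink (resp. source) node of g' if and only if M_{Aᵀ,β,b,c}(g') = g, i.e., g(α) = g'(Aᵀα+β)·(−1)^c·χ_b(α) for all α ∈ 𝔽₂^k. -/

import Mathlib

open Finset

/-- The character `χ_α(x) = (−1)^⟨α,x⟩` on `𝔽₂^k`. -/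
noncomputable def chi {k : ℕ} (α x : Fin k → ZMod 2) : ℝ :=
  (-1 : ℝ) ^ (dotProduct α x).val

/-- The affine lift `M_{A,b,β,c}(f)(y) = f(Ay+b)·(−1)^c·χ_β(y)`. -/
noncomputable def liftMap {k k' : ℕ} (A : Matrix (Fin k) (Fin k') (ZMod 2))
    (b : Fin k → ZMod 2) (β : Fin k' → ZMod 2) (c : ZMod 2)
    (f : (Fin k → ZMod 2) → ℝ) : (Fin k' → ZMod 2) → ℝ :=
  fun y => f (A.mulVec y + b) * (-1 : ℝ) ^ c.val * chi β y

/-- Let `g : F_k` and `g' : F_{k'}` be sink/source placements (a node `v_{χ_α}` is a sink iff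
the placement value at `α` is `1` and a source iff it is `−1`).  The lift `M = M_{A,b,β,c}`
maps every sink node to a sink node and every source node to a source node — the status of
the lifted node `M(χ_α) = (−1)^c χ_b(α) · χ_{Aᵀα+β}` under `g'` being
`g'(Aᵀα+β)·(−1)^c·χ_b(α)` — if and only if `M_{Aᵀ,β,b,c}(g') = g`. -/
theorem lift_sink_source_iff {k k' : ℕ} (hkk : k ≤ k')
    (A : Matrix (Fin k) (Fin k') (ZMod 2)) (hA : A.rank = k)
    (b : Fin k → ZMod 2) (β : Fin k' → ZMod 2) (c : ZMod 2)
    (g : (Fin k → ZMod 2) → ℝ) (g' : (Fin k' → ZMod 2) → ℝ)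
    (hg : ∀ α, g α = 1 ∨ g α = -1) (hg' : ∀ α, g' α = 1 ∨ g' α = -1) :
    (∀ α : Fin k → ZMod 2,
        (g α = 1 → g' (Matrix.vecMul α A + β) * (-1 : ℝ) ^ c.val * chi b α = 1) ∧
        (g α = -1 → g' (Matrix.vecMul α A + β) * (-1 : ℝ) ^ c.val * chi b α = -1))
      ↔ liftMap A.transpose β b c g' = g := by
  constructor
  · intro h
    funext α
    simp only [liftMap, Matrix.mulVec_transpose]
    rcases hg α with hα | hα
    · rw [hα, (h α).1 hα]
    · rw [hα, (h α).2 hα]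
  · intro h α
    have := congrFun h α
    simp only [liftMap, Matrix.mulVec_transpose] at this
    exact ⟨fun hα => this.trans hα, fun hα => this.trans hα⟩
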